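/- Let α, β, B be positive real numbers with α not an integer, let a ∈ ℝ, and let m be the smallest non-negative integer such that B + mβ − α − 1 is not a negative integer. Then for every z > 0, the Riemann–Liouville derivative satisfies (d^α/dz^α)( z^{B−1} · E_{β,B}(a z^{β}) ) = a^m · z^{B+mβ−α−1} · E_{β, B+mβ−α}(a z^{β}). -/

import Mathlib

open Real MeasureTheory

/-- Riemann–Liouville fractional derivative of order `α` (with `n = ⌈α⌉₊`, so that
`n - 1 < α < n` when `α > 0` is not an integer). -/
noncomputable def rlDeriv (α : ℝ) (f : ℝ → ℝ) (z : ℝ) : ℝ :=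
  (1 / Real.Gamma ((⌈α⌉₊ : ℝ) - α)) *
    iteratedDeriv ⌈α⌉₊
      (fun x => ∫ s in (0:ℝ)..x, (x - s) ^ ((⌈α⌉₊ : ℝ) - α - 1) * f s) z

/-- Riemann–Liouville derivative of a complex-valued function,
applied to its real and imaginary parts. -/
noncomputable def rlDerivC (α : ℝ) (f : ℝ → ℂ) (z : ℝ) : ℂ :=
  (rlDeriv α (fun x => (f x).re) z : ℂ) +
    (rlDeriv α (fun x => (f x).im) z : ℂ) * Complex.I

/-- The Mittag-Leffler function `E_{ρ,β}(x)`.  (Recall that in Mathlib the real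
Gamma function vanishes at nonpositive integers, so `1/Γ` is `0` there.) -/
noncomputable def mittagLeffler (ρ β x : ℝ) : ℝ :=
  ∑' i : ℕ, x ^ i / Real.Gamma (ρ * i + β)

/-- The generalized Wright function `ₚΨ_q[x | (A_i, a_i); (B_j, b_j)]`. -/
noncomputable def genWright {p q : ℕ} (A a : Fin p → ℝ) (B b : Fin q → ℝ) (x : ℝ) : ℝ :=
  ∑' k : ℕ, ((∏ i, Real.Gamma (A i + a i * k)) / (∏ j, Real.Gamma (B j + b j * k)))
      * x ^ k / (Nat.factorial k : ℝ)

/-- The Wright function `Ψ(x; ρ, β)`. -/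
noncomputable def wrightFn (x ρ β : ℝ) : ℝ :=
  ∑' i : ℕ, x ^ i / ((Nat.factorial i : ℝ) * Real.Gamma (ρ * i + β))

/-- The Fox H-function `H^{m,0}_{p,q}[w | (A_i,a_i); (B_j,b_j)]`, given by its
Mellin–Barnes integral along the vertical line with real abscissa `γ`. -/
noncomputable def foxH {p q : ℕ} (m : ℕ) (A a : Fin p → ℝ) (B b : Fin q → ℝ)
    (γ : ℝ) (w : ℝ) : ℂ :=
  ((1 / (2 * Real.pi) : ℝ) : ℂ) * ∫ t : ℝ,
    (∏ j : Fin q, if (j : ℕ) < m then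
        Complex.Gamma ((B j : ℂ) - (b j : ℂ) * ((γ : ℂ) + (t : ℂ) * Complex.I)) else 1) /
      ((∏ i : Fin p, Complex.Gamma ((A i : ℂ) - (a i : ℂ) * ((γ : ℂ) + (t : ℂ) * Complex.I))) *
        (∏ j : Fin q, if (j : ℕ) < m then 1 else
          Complex.Gamma (1 - (B j : ℂ) + (b j : ℂ) * ((γ : ℂ) + (t : ℂ) * Complex.I)))) *
    (w : ℂ) ^ ((γ : ℂ) + (t : ℂ) * Complex.I)

/-- `x` is not a negative integer. -/
def notNegInt (x : ℝ) : Prop := ∀ j : ℤ, j < 0 → x ≠ (j : ℝ)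

/-- `x` is not a nonpositive integer. -/
def notNonposInt (x : ℝ) : Prop := ∀ j : ℤ, j ≤ 0 → x ≠ (j : ℝ)

open Filter Topology

lemma gamma_ratio (w : ℝ) : w / Real.Gamma (w + 1) = 1 / Real.Gamma w := by
  rcases eq_or_ne w 0 with rfl | hw
  · simp [Real.Gamma_zero]
  rcases eq_or_ne (Real.Gamma w) 0 with hG | hG
  · obtain ⟨m, hm⟩ := (Real.Gamma_eq_zero_iff w).mp hG
    have hm1 : 1 ≤ m := by
      rcases Nat.eq_zero_or_pos m with rfl | h
      · simp at hm; exact absurd hm hw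
      · exact h
    have : Real.Gamma (w + 1) = 0 := by
      rw [Real.Gamma_eq_zero_iff]
      exact ⟨m - 1, by rw [hm]; push_cast [hm1]; ring⟩
    rw [this, hG, div_zero, div_zero]
  · rw [Real.Gamma_add_one hw]
    field_simp

/-- Growth lemma: `q^i / Γ(β i + c) → 0`. -/
lemma gamma_growth (β c : ℝ) (hβ : 0 < β) (q : ℝ) :
    Tendsto (fun i : ℕ => q ^ i / Real.Gamma (β * i + c)) atTop (𝓝 0) := by
  set Q : ℝ := max 1 (|q| ^ (1 / β)) with hQ
  have hQ1 : (1:ℝ) ≤ Q := le_max_left _ _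
  have hQ0 : (0:ℝ) < Q := lt_of_lt_of_le one_pos hQ1
  have hqQ : |q| ≤ Q ^ β := by
    calc |q| = (|q| ^ (1/β)) ^ β := by
          rw [← Real.rpow_mul (abs_nonneg q), one_div_mul_cancel hβ.ne', Real.rpow_one]
      _ ≤ Q ^ β := Real.rpow_le_rpow (Real.rpow_nonneg (abs_nonneg q) _) (le_max_right _ _) hβ.le
  set k : ℕ → ℕ := fun i => ⌊β * i + c⌋₊ - 1 with hk
  have hki : Tendsto (fun i : ℕ => β * i + c) atTop atTop := by
    apply Tendsto.atTop_add _ tendsto_const_nhds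
    exact (tendsto_natCast_atTop_atTop).const_mul_atTop hβ
  have hklb : ∀ i : ℕ, 2 ≤ β * i + c → β * i + c - 2 ≤ (k i : ℝ) ∧ (Nat.factorial (k i) : ℝ) ≤ Real.Gamma (β * i + c) := by
    intro i hi
    set w : ℝ := β * i + c
    have hw0 : 0 ≤ w := by linarith
    have hfl2 : 2 ≤ ⌊w⌋₊ := Nat.le_floor (by exact_mod_cast hi)
    have hfl : (⌊w⌋₊ : ℝ) ≤ w := Nat.floor_le hw0
    have hfl' : w - 1 < (⌊w⌋₊ : ℝ) := by
      have := Nat.lt_floor_add_one w; linarith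
    have hww : ⌊β * (i:ℝ) + c⌋₊ = ⌊w⌋₊ := rfl
    have hkfl : k i + 1 = ⌊w⌋₊ := by simp only [hk, hww]; omega
    constructor
    · have : (k i : ℝ) = (⌊w⌋₊ : ℝ) - 1 := by
        rw [← hkfl]; push_cast; ring
      rw [this]; linarith
    · have h1 : Real.Gamma ((⌊w⌋₊ : ℝ)) ≤ Real.Gamma w := by
        rcases eq_or_lt_of_le hfl with h | h
        · rw [h]
        · refine le_of_lt (Real.Gamma_strictMonoOn_Ici ?_ ?_ h)
          · exact Set.mem_Ici.mpr (by exact_mod_cast hfl2)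
          · refine Set.mem_Ici.mpr ?_
            have h22 : (2:ℝ) ≤ (⌊w⌋₊ : ℝ) := by exact_mod_cast hfl2
            linarith
      have h2 : Real.Gamma ((⌊w⌋₊ : ℝ)) = (Nat.factorial (k i) : ℝ) := by
        rw [← hkfl]
        push_cast
        exact Real.Gamma_nat_eq_factorial (k i)
      linarith
  have hktop : Tendsto k atTop atTop := by
    rw [tendsto_atTop_atTop]
    intro N
    obtain ⟨M, hM⟩ := (tendsto_atTop_atTop.mp hki) (N + 2)
    refine ⟨M, fun i hi => ?_⟩
    have h2 : (N:ℝ) + 2 ≤ β * i + c := hM i hi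
    have h3 := (hklb i (by linarith)).1
    have : (N:ℝ) ≤ (k i : ℝ) := by linarith
    exact_mod_cast this
  have hg : Tendsto (fun i : ℕ => Q ^ (2 - c) * (Q ^ (k i) / (Nat.factorial (k i) : ℝ))) atTop (𝓝 0) := by
    have := (FloorSemiring.tendsto_pow_div_factorial_atTop (K := ℝ) Q).comp hktop
    simpa using this.const_mul (Q ^ (2 - c))
  apply squeeze_zero_norm' _ hg
  obtain ⟨M, hM⟩ := (tendsto_atTop_atTop.mp hki) 2
  rw [Filter.eventually_atTop]
  refine ⟨M, fun i hi => ?_⟩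
  have h2 : 2 ≤ β * i + c := hM i hi
  obtain ⟨hlb, hfac⟩ := hklb i h2
  have hΓpos : 0 < Real.Gamma (β * i + c) := Real.Gamma_pos_of_pos (by linarith)
  have hfacpos : (0:ℝ) < (Nat.factorial (k i) : ℝ) := by positivity
  have step1 : ‖q ^ i / Real.Gamma (β * i + c)‖ ≤ |q| ^ i / (Nat.factorial (k i) : ℝ) := by
    rw [norm_div, norm_pow, Real.norm_eq_abs, Real.norm_eq_abs, abs_of_pos hΓpos]
    gcongr
  have step2 : |q| ^ i ≤ Q ^ (2 - c) * Q ^ (k i) := by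
    calc |q| ^ i ≤ (Q ^ β) ^ i := pow_le_pow_left₀ (abs_nonneg q) hqQ i
      _ = Q ^ (β * i) := by
          rw [← Real.rpow_natCast (Q ^ β) i, ← Real.rpow_mul hQ0.le]
      _ ≤ Q ^ ((2 - c) + (k i : ℝ)) := Real.rpow_le_rpow_of_exponent_le hQ1 (by linarith)
      _ = Q ^ (2 - c) * Q ^ (k i) := by
          rw [Real.rpow_add hQ0, Real.rpow_natCast]
  calc ‖q ^ i / Real.Gamma (β * i + c)‖ ≤ |q| ^ i / (Nat.factorial (k i) : ℝ) := step1
    _ ≤ (Q ^ (2 - c) * Q ^ (k i)) / (Nat.factorial (k i) : ℝ) := by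
        gcongr
    _ = Q ^ (2 - c) * (Q ^ (k i) / (Nat.factorial (k i) : ℝ)) := by ring

lemma summable_of_abs_le {f g : ℕ → ℝ} (hg : Summable g) (h : ∀ i, |f i| ≤ |g i|) : Summable f :=
  summable_abs_iff.mp (Summable.of_nonneg_of_le (fun i => abs_nonneg _) h (summable_abs_iff.mpr hg))

/-- Master summability lemma with a linear factor. -/
lemma gamma_summable (β c q : ℝ) (hβ : 0 < β) :
    Summable (fun i : ℕ => ((i:ℝ)+1) * q ^ i / Real.Gamma (β * i + c)) := by
  have hgr := gamma_growth β c hβ (4*|q|)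
  have hev : ∀ᶠ (i:ℕ) in Filter.atTop, |((i:ℝ)+1) * q ^ i / Real.Gamma (β * i + c)| ≤ (1/2:ℝ)^i := by
    have h1 : ∀ᶠ (i:ℕ) in Filter.atTop, |(4*|q|) ^ i / Real.Gamma (β * i + c)| ≤ 1 := by
      have habs : Filter.Tendsto (fun i : ℕ => |(4*|q|) ^ i / Real.Gamma (β * i + c)|)
          Filter.atTop (𝓝 0) := by simpa using hgr.abs
      exact (habs.eventually_le_const (by norm_num : (0:ℝ) < 1)).mono (fun i hi => hi)
    have h2 : ∀ᶠ (i:ℕ) in Filter.atTop, 2 ≤ β * i + c := by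
      have hki : Filter.Tendsto (fun i : ℕ => β * i + c) Filter.atTop Filter.atTop := by
        apply Filter.Tendsto.atTop_add _ tendsto_const_nhds
        exact (tendsto_natCast_atTop_atTop).const_mul_atTop hβ
      exact hki.eventually_ge_atTop 2
    filter_upwards [h1, h2] with i h1 h2
    have hΓ : 0 < Real.Gamma (β * i + c) := Real.Gamma_pos_of_pos (by linarith)
    have hi2 : ((i:ℝ)+1) ≤ 2 ^ i := by
      have h0 : i + 1 ≤ 2^i := Nat.lt_two_pow_self
      exact_mod_cast h0
    have e1 : |((i:ℝ)+1) * q ^ i / Real.Gamma (β*i+c)| = ((i:ℝ)+1) * |q|^i / Real.Gamma (β*i+c) := by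
      rw [abs_div, abs_mul, abs_pow, abs_of_pos hΓ, abs_of_nonneg (by positivity : (0:ℝ) ≤ (i:ℝ)+1)]
    rw [e1]
    have e2 : ((i:ℝ)+1) * |q|^i ≤ (1/2)^i * (4*|q|)^i := by
      calc ((i:ℝ)+1) * |q|^i ≤ 2^i * |q|^i := by gcongr
        _ = (1/2)^i * (4*|q|)^i := by rw [← mul_pow, ← mul_pow]; congr 1; ring
    calc ((i:ℝ)+1) * |q|^i / Real.Gamma (β*i+c) ≤ ((1/2)^i * (4*|q|)^i) / Real.Gamma (β*i+c) := by
          gcongr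
      _ = (1/2)^i * ((4*|q|)^i / Real.Gamma (β*i+c)) := by ring
      _ ≤ (1/2)^i * 1 :=
          mul_le_mul_of_nonneg_left (le_of_abs_le h1) (by positivity)
      _ = (1/2)^i := mul_one _
  obtain ⟨N, hN⟩ := Filter.eventually_atTop.mp hev
  have hgsum : Summable (fun i : ℕ => (1/2:ℝ)^(i+N)) := by
    have := (summable_geometric_of_lt_one (by norm_num : (0:ℝ) ≤ 1/2)
      (by norm_num : (1/2:ℝ) < 1)).mul_right ((1/2:ℝ)^N)
    simpa [pow_add] using this
  refine (summable_nat_add_iff N).mp (summable_of_abs_le hgsum ?_)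
  intro i
  rw [abs_of_nonneg (by positivity : (0:ℝ) ≤ (1/2:ℝ)^(i+N))]
  exact hN (i+N) (Nat.le_add_left N i)

lemma gamma_summable' (β c q : ℝ) (hβ : 0 < β) :
    Summable (fun i : ℕ => q ^ i / Real.Gamma (β * i + c)) := by
  refine summable_of_abs_le (gamma_summable β c q hβ) fun i => ?_
  rw [abs_div, abs_div, abs_mul, div_eq_mul_inv, div_eq_mul_inv]
  refine mul_le_mul_of_nonneg_right ?_ (inv_nonneg.mpr (abs_nonneg _))
  refine le_mul_of_one_le_left (abs_nonneg _) ?_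
  rw [abs_of_nonneg (by positivity : (0:ℝ) ≤ (i:ℝ)+1)]
  linarith [Nat.cast_nonneg (α := ℝ) i]

lemma gamma_summable_lin (β c t q : ℝ) (hβ : 0 < β) :
    Summable (fun i : ℕ => |β * i + t| * q ^ i / Real.Gamma (β * i + c)) := by
  refine summable_of_abs_le ((gamma_summable β c q hβ).mul_left (β + |t|)) fun i => ?_
  have hrw : |(β + |t|) * (((i:ℝ)+1) * q ^ i / Real.Gamma (β * i + c))|
      = ((β + |t|) * ((i:ℝ)+1) * |q ^ i|) * |Real.Gamma (β * i + c)|⁻¹ := by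
    rw [abs_mul, abs_div, abs_mul, abs_of_nonneg (by positivity : (0:ℝ) ≤ β + |t|),
      abs_of_nonneg (by positivity : (0:ℝ) ≤ (i:ℝ)+1)]
    ring
  rw [hrw, abs_div, abs_mul, abs_abs, div_eq_mul_inv]
  refine mul_le_mul_of_nonneg_right ?_ (inv_nonneg.mpr (abs_nonneg _))
  refine mul_le_mul_of_nonneg_right ?_ (abs_nonneg _)
  have h1 : |β * i + t| ≤ β * i + |t| := by
    calc |β * i + t| ≤ |β * i| + |t| := abs_add_le _ _
      _ = β * i + |t| := by rw [abs_of_nonneg (by positivity)]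
  nlinarith [abs_nonneg t, Nat.cast_nonneg (α := ℝ) i, hβ.le]

/-- The auxiliary power-series function `S_{a,β,t}(x) = ∑ aⁱ x^{βi+t-1}/Γ(βi+t)`. -/
noncomputable def mlS (a β t x : ℝ) : ℝ :=
  ∑' i : ℕ, a ^ i * x ^ (β * i + t - 1) / Real.Gamma (β * i + t)

lemma mlS_term_eq (a β t : ℝ) {x : ℝ} (hx : 0 < x) (i : ℕ) :
    a ^ i * x ^ (β * i + t - 1) / Real.Gamma (β * i + t)
      = (a * x ^ β) ^ i / Real.Gamma (β * i + t) * x ^ (t - 1) := by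
  have h1 : x ^ (β * (i:ℝ) + t - 1) = x ^ (β * (i:ℝ)) * x ^ (t - 1) := by
    rw [show β * (i:ℝ) + t - 1 = β * (i:ℝ) + (t - 1) by ring, Real.rpow_add hx]
  have h2 : x ^ (β * (i:ℝ)) = (x ^ β) ^ i := by
    rw [Real.rpow_mul hx.le, Real.rpow_natCast]
  rw [h1, h2, mul_pow]
  ring

lemma mlS_summable (a β t : ℝ) (hβ : 0 < β) {x : ℝ} (hx : 0 < x) :
    Summable (fun i : ℕ => a ^ i * x ^ (β * i + t - 1) / Real.Gamma (β * i + t)) := by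
  have := (gamma_summable' β t (a * x ^ β) hβ).mul_right (x ^ (t-1))
  refine this.congr fun i => ?_
  exact (mlS_term_eq a β t hx i).symm

noncomputable def mlTerm (a β t : ℝ) (i : ℕ) (y : ℝ) : ℝ :=
  a ^ i * y ^ (β * i + t - 1) / Real.Gamma (β * i + t)

lemma mlS_eq_tsum_mlTerm (a β t x : ℝ) : mlS a β t x = ∑' i, mlTerm a β t i x := rfl

lemma mlTerm_hasDerivAt (a β t : ℝ) (i : ℕ) {y : ℝ} (hy : 0 < y) :
    HasDerivAt (mlTerm a β t i) (mlTerm a β (t-1) i y) y := by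
  have h := (Real.hasDerivAt_rpow_const (x := y) (p := β * i + t - 1)
    (Or.inl hy.ne')).const_mul (a ^ i) |>.div_const (Real.Gamma (β * i + t))
  have : HasDerivAt (mlTerm a β t i)
      (a ^ i * ((β * i + t - 1) * y ^ (β * i + t - 1 - 1)) / Real.Gamma (β * i + t)) y := h
  convert this using 1
  have e1 : β * (i:ℝ) + t = (β * i + t - 1) + 1 := by ring
  have e2 : β * (i:ℝ) + (t - 1) = β * i + t - 1 := by ring
  have e3 : β * (i:ℝ) + (t-1) - 1 = β * i + t - 1 - 1 := by ring
  rw [mlTerm, e3, e2]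
  have e4 : Real.Gamma (β * (i:ℝ) + t - 1 + 1) = Real.Gamma (β * i + t) := by
    congr 1
    ring
  rw [← e4]
  calc a ^ i * y ^ (β * (i:ℝ) + t - 1 - 1) / Real.Gamma (β * i + t - 1)
      = (a ^ i * y ^ (β * (i:ℝ) + t - 1 - 1)) * (1 / Real.Gamma (β * i + t - 1)) := by ring
    _ = (a ^ i * y ^ (β * (i:ℝ) + t - 1 - 1)) * ((β * i + t - 1) / Real.Gamma (β * i + t - 1 + 1)) := by
        rw [← gamma_ratio]
    _ = a ^ i * ((β * i + t - 1) * y ^ (β * (i:ℝ) + t - 1 - 1)) / Real.Gamma (β * i + t - 1 + 1) := by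
        ring

lemma mlS_hasDerivAt (a β t : ℝ) (hβ : 0 < β) {x : ℝ} (hx : 0 < x) :
    HasDerivAt (mlS a β t) (mlS a β (t-1) x) x := by
  have hTLU : TendstoLocallyUniformlyOn
      (fun N : ℕ => fun y => ∑ i ∈ Finset.range N, mlTerm a β (t-1) i y)
      (fun y => ∑' i, mlTerm a β (t-1) i y) Filter.atTop (Set.Ioi (0:ℝ)) := by
    rw [tendstoLocallyUniformlyOn_iff_forall_isCompact isOpen_Ioi]
    intro K hK hKc
    rcases K.eq_empty_or_nonempty with rfl | hKne
    · simpa using tendstoUniformlyOn_empty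
    set lo : ℝ := sInf K with hlo
    set hi : ℝ := sSup K with hhi
    have hlomem : lo ∈ K := hKc.sInf_mem hKne
    have hlo0 : 0 < lo := hK hlomem
    have hKsub : K ⊆ Set.Icc lo hi := fun y hy =>
      ⟨csInf_le hKc.bddBelow hy, le_csSup hKc.bddAbove hy⟩
    set D : ℝ := max hi 1 with hD
    have hD1 : (1:ℝ) ≤ D := le_max_right _ _
    have hD0 : (0:ℝ) < D := lt_of_lt_of_le one_pos hD1
    set M : ℝ := max (lo ^ (t-2)) (D ^ (t-2)) with hM
    have hM0 : 0 ≤ M := le_trans (Real.rpow_nonneg hlo0.le _) (le_max_left _ _)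
    have husum : Summable (fun i : ℕ => M * (|a| * D ^ β) ^ i / |Real.Gamma (β * i + (t-1))|) := by
      refine summable_of_abs_le ((gamma_summable' β (t-1) (|a| * D ^ β) hβ).mul_left M)
        fun i => ?_
      have h2 : |M * ((|a| * D ^ β) ^ i / Real.Gamma (β * i + (t-1)))|
          = M * (|a| * D ^ β) ^ i / |Real.Gamma (β * i + (t-1))| := by
        rw [abs_mul, abs_div, abs_of_nonneg hM0,
          abs_of_nonneg (by positivity : (0:ℝ) ≤ (|a| * D ^ β) ^ i)]
        ring
      rw [h2, abs_of_nonneg (show (0:ℝ) ≤ M * (|a| * D ^ β) ^ i / |Real.Gamma (β * i + (t-1))|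
        by positivity)]
    refine tendstoUniformlyOn_tsum_nat husum fun i y hy => ?_
    have hy' := hKsub hy
    have hy0 : 0 < y := hK hy
    rcases eq_or_ne (Real.Gamma (β * i + (t-1))) 0 with hΓ | hΓ
    · simp [mlTerm, hΓ]
    have hnum : ‖mlTerm a β (t-1) i y‖
        = |a| ^ i * y ^ (β * i + (t-1) - 1) / |Real.Gamma (β * i + (t-1))| := by
      rw [mlTerm, Real.norm_eq_abs, abs_div, abs_mul, abs_pow,
        abs_of_nonneg (Real.rpow_nonneg hy0.le _)]
    rw [hnum]
    have e2 : y ^ (β * (i:ℝ)) ≤ (D ^ β) ^ i := by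
      rw [← Real.rpow_natCast (D ^ β) i, ← Real.rpow_mul hD0.le]
      exact Real.rpow_le_rpow hy0.le (le_trans hy'.2 (le_max_left _ _)) (by positivity)
    have e3 : y ^ (t-2) ≤ M := by
      rcases le_or_gt 0 (t-2) with h | h
      · exact le_trans (Real.rpow_le_rpow hy0.le (le_trans hy'.2 (le_max_left _ _)) h)
          (le_max_right _ _)
      · exact le_trans (Real.rpow_le_rpow_of_nonpos hlo0 hy'.1 h.le) (le_max_left _ _)
    have hexp : y ^ (β * (i:ℝ) + (t-1) - 1) ≤ M * (D ^ β) ^ i := by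
      have e1 : y ^ (β * (i:ℝ) + (t-1) - 1) = y ^ (β * (i:ℝ)) * y ^ (t-2) := by
        rw [← Real.rpow_add hy0]
        congr 1
        ring
      calc y ^ (β * (i:ℝ) + (t-1) - 1) = y ^ (β * (i:ℝ)) * y ^ (t-2) := e1
        _ ≤ (D ^ β) ^ i * M :=
            mul_le_mul e2 e3 (Real.rpow_nonneg hy0.le _) (by positivity)
        _ = M * (D ^ β) ^ i := by ring
    calc |a| ^ i * y ^ (β * (i:ℝ) + (t-1) - 1) / |Real.Gamma (β * i + (t-1))|
        ≤ |a| ^ i * (M * (D ^ β) ^ i) / |Real.Gamma (β * i + (t-1))| := by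
          have hΓp : 0 < |Real.Gamma (β * i + (t-1))| := abs_pos.mpr hΓ
          gcongr
      _ = M * (|a| * D ^ β) ^ i / |Real.Gamma (β * i + (t-1))| := by
          rw [mul_pow]; ring
  have hsum : ∀ y ∈ Set.Ioi (0:ℝ), Filter.Tendsto
      (fun N => ∑ i ∈ Finset.range N, mlTerm a β t i y)
      Filter.atTop (𝓝 (mlS a β t y)) := fun y hy =>
    (mlS_summable a β t hβ hy).hasSum.tendsto_sum_nat
  exact hasDerivAt_of_tendstoLocallyUniformlyOn isOpen_Ioi hTLU
    (Filter.Eventually.of_forall (fun N y hy => HasDerivAt.sum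
      (fun i _ => mlTerm_hasDerivAt a β t i hy))) (fun y hy => by simpa only [Finset.sum_apply] using hsum y hy) (Set.mem_Ioi.mpr hx)

lemma mlS_iteratedDeriv (c a β : ℝ) (hβ : 0 < β) (k : ℕ) :
    ∀ t : ℝ, ∀ x : ℝ, 0 < x →
      iteratedDeriv k (fun y => c * mlS a β t y) x = c * mlS a β (t - k) x := by
  induction k with
  | zero => intro t x hx; simp
  | succ k ih =>
    intro t x hx
    rw [iteratedDeriv_succ]
    have hev : (iteratedDeriv k (fun y => c * mlS a β t y))
        =ᶠ[𝓝 x] (fun y => c * mlS a β (t - k) y) := by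
      filter_upwards [isOpen_Ioi.mem_nhds (Set.mem_Ioi.mpr hx)] with y hy
      exact ih t y hy
    rw [hev.deriv_eq, ((mlS_hasDerivAt a β (t - k) hβ hx).const_mul c).deriv]
    congr 2
    push_cast
    ring

/-- Real Beta integral in scaled form. -/
lemma beta_integral_real {u v x : ℝ} (hu : 0 < u) (hv : 0 < v) (hx : 0 < x) :
    ∫ s in (0:ℝ)..x, (x - s) ^ (u-1) * s ^ (v-1)
      = Real.Gamma u * Real.Gamma v / Real.Gamma (u+v) * x ^ (u+v-1) := by
  have hscaled := Complex.betaIntegral_scaled (v:ℂ) (u:ℂ) hx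
  have hofReal : ((∫ s in (0:ℝ)..x, (x - s) ^ (u-1) * s ^ (v-1) : ℝ) : ℂ)
      = ∫ s in (0:ℝ)..x, (s:ℂ) ^ ((v:ℂ)-1) * ((x:ℂ) - s) ^ ((u:ℂ)-1) := by
    rw [← intervalIntegral.integral_ofReal]
    refine intervalIntegral.integral_congr fun s hs => ?_
    rw [Set.uIcc_of_le hx.le] at hs
    obtain ⟨hs0, hsx⟩ := hs
    push_cast
    rw [Complex.ofReal_cpow (by linarith : (0:ℝ) ≤ x - s) (u-1),
      Complex.ofReal_cpow hs0 (v-1)]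
    push_cast
    ring
  have hbeta : Complex.betaIntegral (v:ℂ) (u:ℂ)
      = (Real.Gamma u * Real.Gamma v / Real.Gamma (u+v) : ℝ) := by
    have hG := Complex.Gamma_mul_Gamma_eq_betaIntegral
      (s := (v:ℂ)) (t := (u:ℂ)) (by simpa using hv) (by simpa using hu)
    have hGne : Complex.Gamma ((v:ℂ) + u) ≠ 0 :=
      Complex.Gamma_ne_zero_of_re_pos (by simpa using (by linarith : (0:ℝ) < v + u))
    have hbv : Complex.betaIntegral (v:ℂ) (u:ℂ)
        = Complex.Gamma (v:ℂ) * Complex.Gamma (u:ℂ) / Complex.Gamma ((v:ℂ)+u) := by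
      rw [eq_div_iff hGne, mul_comm, ← hG]
    rw [hbv, show ((v:ℂ) + u) = ((u + v : ℝ) : ℂ) by push_cast; ring,
      show ((v:ℂ)) = ((v:ℝ):ℂ) by norm_cast, show ((u:ℂ)) = ((u:ℝ):ℂ) by norm_cast,
      Complex.Gamma_ofReal, Complex.Gamma_ofReal, Complex.Gamma_ofReal]
    push_cast
    ring
  have hxpow : ((x:ℂ)) ^ ((v:ℂ) + u - 1) = ((x ^ (u+v-1) : ℝ) : ℂ) := by
    rw [Complex.ofReal_cpow hx.le]
    push_cast
    ring_nf
  apply Complex.ofReal_injective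
  rw [hofReal, hscaled, hxpow, hbeta]
  push_cast
  ring

/-- Integrability of the Beta-type integrand. -/
lemma beta_integrable {u v x : ℝ} (hu : 0 < u) (hv : 0 < v) (hx : 0 < x) :
    IntervalIntegrable (fun s => (x - s) ^ (u-1) * s ^ (v-1)) volume 0 x := by
  have hmeas : Measurable (fun s : ℝ => (x - s) ^ (u-1) * s ^ (v-1)) := by fun_prop
  have half : (0:ℝ) < x/2 := by linarith
  have part1 : IntervalIntegrable (fun s => (x - s) ^ (u-1) * s ^ (v-1)) volume 0 (x/2) := by
    set C : ℝ := max ((x/2) ^ (u-1)) (x ^ (u-1)) with hC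
    have hint : IntervalIntegrable (fun s : ℝ => C * s ^ (v-1)) volume 0 (x/2) :=
      (intervalIntegral.intervalIntegrable_rpow' (by linarith : (-1:ℝ) < v-1)).const_mul C
    refine hint.mono_fun' (hmeas.aestronglyMeasurable) ?_
    rw [Filter.EventuallyLE, ae_restrict_iff' measurableSet_uIoc]
    refine Filter.Eventually.of_forall fun s hs => ?_
    rw [Set.uIoc_of_le half.le] at hs
    obtain ⟨hs0, hsx⟩ := hs
    have hxs : x/2 ≤ x - s := by linarith
    have hxs' : x - s ≤ x := by linarith
    have hbound : (x - s) ^ (u-1) ≤ C := by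
      rcases le_or_gt 0 (u-1) with h | h
      · exact le_trans (Real.rpow_le_rpow (by linarith) hxs' h) (le_max_right _ _)
      · exact le_trans (Real.rpow_le_rpow_of_nonpos half hxs h.le) (le_max_left _ _)
    have h1 : ‖(x - s) ^ (u-1) * s ^ (v-1)‖ = (x - s) ^ (u-1) * s ^ (v-1) := by
      rw [Real.norm_eq_abs, abs_of_nonneg]
      exact mul_nonneg (Real.rpow_nonneg (by linarith) _) (Real.rpow_nonneg hs0.le _)
    rw [h1]
    exact mul_le_mul_of_nonneg_right hbound (Real.rpow_nonneg hs0.le _)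
  have part2 : IntervalIntegrable (fun s => (x - s) ^ (u-1) * s ^ (v-1)) volume (x/2) x := by
    set C : ℝ := max ((x/2) ^ (v-1)) (x ^ (v-1)) with hC
    have hint0 : IntervalIntegrable (fun s : ℝ => s ^ (u-1)) volume 0 (x/2) :=
      intervalIntegral.intervalIntegrable_rpow' (by linarith : (-1:ℝ) < u-1)
    have hint1 : IntervalIntegrable (fun s : ℝ => (x - s) ^ (u-1)) volume (x - x/2) (x - 0) :=
      (hint0.comp_sub_left x).symm
    have hint2 : IntervalIntegrable (fun s : ℝ => C * (x - s) ^ (u-1)) volume (x/2) x := by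
      have : x - x/2 = x/2 := by ring
      rw [this, sub_zero] at hint1
      exact hint1.const_mul C
    refine hint2.mono_fun' (hmeas.aestronglyMeasurable) ?_
    rw [Filter.EventuallyLE, ae_restrict_iff' measurableSet_uIoc]
    refine Filter.Eventually.of_forall fun s hs => ?_
    rw [Set.uIoc_of_le (by linarith : x/2 ≤ x)] at hs
    obtain ⟨hs0, hsx⟩ := hs
    have hbound : s ^ (v-1) ≤ C := by
      rcases le_or_gt 0 (v-1) with h | h
      · exact le_trans (Real.rpow_le_rpow (by linarith) hsx h) (le_max_right _ _)
      · exact le_trans (Real.rpow_le_rpow_of_nonpos half hs0.le h.le) (le_max_left _ _)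
    have h1 : ‖(x - s) ^ (u-1) * s ^ (v-1)‖ = (x - s) ^ (u-1) * s ^ (v-1) := by
      rw [Real.norm_eq_abs, abs_of_nonneg]
      exact mul_nonneg (Real.rpow_nonneg (by linarith) _) (Real.rpow_nonneg (by linarith) _)
    rw [h1, mul_comm C ((x - s) ^ (u-1))]
    exact mul_le_mul_of_nonneg_left hbound (Real.rpow_nonneg (by linarith) _)
  exact part1.trans part2

lemma mlS_eq_ml (a β t : ℝ) {x : ℝ} (hx : 0 < x) :
    x ^ (t-1) * mittagLeffler β t (a * x ^ β) = mlS a β t x := by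
  rw [mittagLeffler, mlS, ← tsum_mul_left]
  congr 1
  funext i
  rw [mlS_term_eq a β t hx i]
  ring

lemma convolution_eq (a β B μ : ℝ) (hβ : 0 < β) (hB : 0 < B) (hμ : 0 < μ) {x : ℝ} (hx : 0 < x) :
    ∫ s in (0:ℝ)..x, (x - s) ^ (μ - 1) * (s ^ (B-1) * mittagLeffler β B (a * s ^ β))
      = Real.Gamma μ * mlS a β (B + μ) x := by
  have hΓpos : ∀ i : ℕ, (0:ℝ) < Real.Gamma (β * i + B) := fun i =>
    Real.Gamma_pos_of_pos (by positivity)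
  have hμB : ∀ i : ℕ, (0:ℝ) < Real.Gamma (μ + (β * i + B)) := fun i =>
    Real.Gamma_pos_of_pos (by positivity)
  rw [intervalIntegral.integral_of_le hx.le]
  have hcongr : Set.EqOn (fun s => (x - s) ^ (μ - 1) * (s ^ (B-1) * mittagLeffler β B (a * s ^ β)))
      (fun s => ∑' i, (x - s) ^ (μ - 1) * mlTerm a β B i s) (Set.Ioc 0 x) := by
    intro s hs
    simp only
    rw [mlS_eq_ml a β B hs.1, mlS_eq_tsum_mlTerm, ← tsum_mul_left]
  rw [MeasureTheory.setIntegral_congr_fun measurableSet_Ioc hcongr]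
  have hFi : ∀ i : ℕ, (fun s => (x - s) ^ (μ - 1) * mlTerm a β B i s)
      = (fun s => (a ^ i / Real.Gamma (β * i + B)) * ((x - s) ^ (μ - 1) * s ^ (β * i + B - 1))) := by
    intro i
    funext s
    rw [mlTerm]
    ring
  have hInt : ∀ i : ℕ, Integrable (fun s => (x - s) ^ (μ - 1) * mlTerm a β B i s)
      (volume.restrict (Set.Ioc 0 x)) := by
    intro i
    rw [hFi i]
    exact (((intervalIntegrable_iff_integrableOn_Ioc_of_le hx.le).mp
      (beta_integrable hμ (by positivity : (0:ℝ) < β * i + B) hx))).const_mul _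
  have hbetaval : ∀ i : ℕ, ∫ s in Set.Ioc 0 x, (x - s) ^ (μ - 1) * s ^ (β * i + B - 1)
      = Real.Gamma μ * Real.Gamma (β * i + B) / Real.Gamma (μ + (β * i + B)) * x ^ (μ + (β * i + B) - 1) := by
    intro i
    rw [← intervalIntegral.integral_of_le hx.le]
    exact beta_integral_real hμ (by positivity) hx
  have hnormval : ∀ i : ℕ, (∫ s in Set.Ioc 0 x, ‖(x - s) ^ (μ - 1) * mlTerm a β B i s‖)
      = (Real.Gamma μ * x ^ (μ + B - 1)) * ((|a| * x ^ β) ^ i / Real.Gamma (μ + (β * i + B))) := by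
    intro i
    have h1 : Set.EqOn (fun s => ‖(x - s) ^ (μ - 1) * mlTerm a β B i s‖)
        (fun s => (|a| ^ i / Real.Gamma (β * i + B)) * ((x - s) ^ (μ - 1) * s ^ (β * i + B - 1)))
        (Set.Ioc 0 x) := by
      intro s hs
      simp only [Real.norm_eq_abs, mlTerm, abs_mul, abs_div, abs_pow]
      rw [abs_of_pos (hΓpos i),
        abs_of_nonneg (Real.rpow_nonneg (show (0:ℝ) ≤ x - s by linarith [hs.2]) _),
        abs_of_nonneg (Real.rpow_nonneg hs.1.le _)]
      ring
    rw [MeasureTheory.setIntegral_congr_fun measurableSet_Ioc h1,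
      MeasureTheory.integral_const_mul, hbetaval i]
    have hxsplit : x ^ (μ + (β * (i:ℝ) + B) - 1) = (x ^ β) ^ i * x ^ (μ + B - 1) := by
      rw [← Real.rpow_natCast (x ^ β) i, ← Real.rpow_mul hx.le, ← Real.rpow_add hx]
      congr 1
      ring
    rw [hxsplit]
    field_simp
    ring
  have hsum : Summable (fun i : ℕ => ∫ s in Set.Ioc 0 x, ‖(x - s) ^ (μ - 1) * mlTerm a β B i s‖) := by
    have base : Summable (fun i : ℕ => (Real.Gamma μ * x ^ (μ + B - 1))
        * ((|a| * x ^ β) ^ i / Real.Gamma (β * i + (μ + B)))) :=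
      (gamma_summable' β (μ + B) (|a| * x ^ β) hβ).mul_left _
    refine base.congr fun i => ?_
    rw [hnormval i, show μ + (β * (i:ℝ) + B) = β * i + (μ + B) by ring]
  rw [← MeasureTheory.integral_tsum_of_summable_integral_norm hInt hsum]
  have hterm : ∀ i : ℕ, (∫ s in Set.Ioc 0 x, (x - s) ^ (μ - 1) * mlTerm a β B i s)
      = Real.Gamma μ * mlTerm a β (B + μ) i x := by
    intro i
    rw [hFi i, MeasureTheory.integral_const_mul, hbetaval i, mlTerm,
      show β * (i:ℝ) + (B + μ) = μ + (β * i + B) by ring]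
    field_simp
  rw [tsum_congr hterm, tsum_mul_left]
  rfl


/-- fractional derivative of `z^{B-1} E_{β,B}(a z^β)`. -/
theorem statement0 (α β B : ℝ) (hα : 0 < α) (hβ : 0 < β) (hB : 0 < B)
    (hαni : ∀ k : ℤ, α ≠ (k : ℝ)) (a : ℝ) (m : ℕ)
    (hm : notNegInt (B + m * β - α - 1))
    (hmin : ∀ m' : ℕ, m' < m → ¬ notNegInt (B + m' * β - α - 1)) :
    ∀ z : ℝ, 0 < z →
      rlDeriv α (fun x => x ^ (B - 1) * mittagLeffler β B (a * x ^ β)) z =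
        a ^ m * z ^ (B + m * β - α - 1) * mittagLeffler β (B + m * β - α) (a * z ^ β) := by
  intro z hz
  set n : ℕ := ⌈α⌉₊ with hn
  have hne : α ≠ (n : ℝ) := by
    have := hαni (n : ℤ)
    simpa using this
  have hαlt : α < n := lt_of_le_of_ne (Nat.le_ceil α) hne
  set μ : ℝ := (n : ℝ) - α with hμdef
  have hμ : 0 < μ := by simp only [hμdef]; linarith
  have hΓμ : Real.Gamma μ ≠ 0 := (Real.Gamma_pos_of_pos hμ).ne'
  rw [rlDeriv]
  have hev : (fun x => ∫ s in (0:ℝ)..x, (x - s) ^ ((n:ℝ) - α - 1) *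
        (s ^ (B - 1) * mittagLeffler β B (a * s ^ β)))
      =ᶠ[𝓝 z] (fun x => Real.Gamma μ * mlS a β (B + μ) x) := by
    filter_upwards [isOpen_Ioi.mem_nhds (Set.mem_Ioi.mpr hz)] with y hy
    exact convolution_eq a β B μ hβ hB hμ hy
  rw [hev.iteratedDeriv_eq n, mlS_iteratedDeriv (Real.Gamma μ) a β hβ n (B + μ) z hz]
  rw [show B + μ - (n:ℝ) = B - α by rw [hμdef]; ring]
  rw [one_div, inv_mul_cancel_left₀ hΓμ]
  -- now compute `mlS a β (B - α) z`
  have hsummable : Summable (fun i : ℕ => mlTerm a β (B - α) i z) :=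
    mlS_summable a β (B - α) hβ hz
  have hzero : ∀ i ∈ Finset.range m, mlTerm a β (B - α) i z = 0 := by
    intro i hi
    have hni := hmin i (Finset.mem_range.mp hi)
    rw [notNegInt] at hni
    push_neg at hni
    obtain ⟨j, hj0, hji⟩ := hni
    have hΓ0 : Real.Gamma (β * i + (B - α)) = 0 := by
      rw [Real.Gamma_eq_zero_iff]
      refine ⟨(-(j+1)).toNat, ?_⟩
      have hjn : ((-(j+1)).toNat : ℤ) = -(j+1) := Int.toNat_of_nonneg (by omega)
      have : (β : ℝ) * i + (B - α) = (j : ℝ) + 1 := by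
        have : B + (i:ℝ) * β - α - 1 = (j : ℝ) := hji
        linarith
      rw [this]
      have h2 : (((-(j+1)).toNat : ℤ) : ℝ) = -((j:ℝ)+1) := by
        rw [hjn]; push_cast; ring
      push_cast at h2
      linarith
    rw [mlTerm, hΓ0, div_zero]
  have hterm2 : ∀ i : ℕ, mlTerm a β (B - α) (i+m) z
      = a ^ m * z ^ (B + (m:ℝ) * β - α - 1)
        * ((a * z ^ β) ^ i / Real.Gamma (β * i + (B + (m:ℝ) * β - α))) := by
    intro i
    rw [mlTerm]
    rw [show β * ((i+m : ℕ):ℝ) + (B - α) = β * (i:ℝ) + (B + (m:ℝ) * β - α) by push_cast; ring]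
    have hexp : z ^ (β * (i:ℝ) + (B + (m:ℝ) * β - α) - 1)
        = (z ^ β) ^ i * z ^ (B + (m:ℝ) * β - α - 1) := by
      rw [← Real.rpow_natCast (z ^ β) i, ← Real.rpow_mul hz.le, ← Real.rpow_add hz]
      congr 1
      ring
    rw [hexp, pow_add, mul_pow]
    ring
  calc mlS a β (B - α) z
      = (∑ i ∈ Finset.range m, mlTerm a β (B - α) i z)
        + ∑' i, mlTerm a β (B - α) (i+m) z := (Summable.sum_add_tsum_nat_add m hsummable).symm
    _ = ∑' i, mlTerm a β (B - α) (i+m) z := by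
        rw [Finset.sum_eq_zero hzero, zero_add]
    _ = a ^ m * z ^ (B + (m:ℝ) * β - α - 1) * mittagLeffler β (B + (m:ℝ) * β - α) (a * z ^ β) := by
        rw [tsum_congr hterm2, tsum_mul_left]
        rfl
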